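/- Let V be symmetric positive definite, S skew-symmetric, B = −(I+S)V^{−1}, h > 0, σ > 0, and suppose the spectral radius of I + hB is less than 1. Let R be the unique positive definite solution of R = 2hσ²I + (I+hB)R(I+hB'). Then R ⪰ σ²V in the Loewner order. -/

import Mathlib

open Matrix Filter Topology

section AuxComplex

attribute [local instance] Matrix.linftyOpNormedRing Matrix.linftyOpNormedAlgebra

lemma aux_entry_nnnorm_le {n : ℕ} (X : Matrix (Fin n) (Fin n) ℂ) (i j : Fin n) :
    ‖X i j‖₊ ≤ ‖X‖₊ := by
  rw [Matrix.linfty_opNNNorm_def]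
  calc ‖X i j‖₊ ≤ ∑ k, ‖X i k‖₊ :=
        Finset.single_le_sum (f := fun k => ‖X i k‖₊) (fun k _ => zero_le) (Finset.mem_univ j)
    _ ≤ _ := Finset.le_sup (f := fun i : Fin n => ∑ k, ‖X i k‖₊) (Finset.mem_univ i)

lemma aux_pow_entry_tendsto {n : ℕ} (M : Matrix (Fin n) (Fin n) ℂ)
    (hs : spectralRadius ℂ M < 1) (i j : Fin n) :
    Tendsto (fun N : ℕ => ‖(M ^ N) i j‖) atTop (𝓝 0) := by
  obtain ⟨r, hrρ, hr1⟩ := ENNReal.lt_iff_exists_nnreal_btwn.mp hs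
  have hgel := spectrum.pow_nnnorm_pow_one_div_tendsto_nhds_spectralRadius M
  have hev : ∀ᶠ N : ℕ in atTop, (‖M ^ N‖₊ : ENNReal) ^ (1 / (N : ℝ)) < (r : ENNReal) :=
    hgel.eventually_lt_const hrρ
  have hev' : ∀ᶠ N : ℕ in atTop, ‖(M ^ N) i j‖ ≤ (r : ℝ) ^ N := by
    filter_upwards [hev, eventually_ge_atTop 1] with N hN hN1
    have hNpos : (0 : ℝ) < (N : ℝ) := by exact_mod_cast hN1
    have h2 : ((‖M ^ N‖₊ : ENNReal) ^ (1 / (N : ℝ))) ^ (N : ℝ)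
        < (r : ENNReal) ^ (N : ℝ) := ENNReal.rpow_lt_rpow hN hNpos
    rw [← ENNReal.rpow_mul, one_div, inv_mul_cancel₀ (ne_of_gt hNpos),
      ENNReal.rpow_one, ENNReal.rpow_natCast] at h2
    have h3 : ‖M ^ N‖₊ < r ^ N := by
      have := h2
      rw [← ENNReal.coe_pow, ENNReal.coe_lt_coe] at this
      exact this
    have h4 : ‖(M ^ N) i j‖₊ ≤ r ^ N :=
      le_trans (aux_entry_nnnorm_le _ i j) (le_of_lt h3)
    calc ‖(M ^ N) i j‖ = ((‖(M ^ N) i j‖₊ : ℝ)) := rfl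
      _ ≤ ((r ^ N : NNReal) : ℝ) := by exact_mod_cast h4
      _ = (r : ℝ) ^ N := by push_cast; ring
  have hr1' : (r : ℝ) < 1 := by exact_mod_cast hr1
  have hpow : Tendsto (fun N : ℕ => (r : ℝ) ^ N) atTop (𝓝 0) :=
    tendsto_pow_atTop_nhds_zero_of_lt_one r.coe_nonneg hr1'
  exact tendsto_of_tendsto_of_tendsto_of_le_of_le' tendsto_const_nhds hpow
    (Eventually.of_forall fun N => norm_nonneg _) hev'

end AuxComplex

lemma aux_real_pow_tendsto {n : ℕ} (A : Matrix (Fin n) (Fin n) ℝ)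
    (hs : spectralRadius ℂ (A.map Complex.ofReal) < 1) :
    Tendsto (fun N : ℕ => A ^ N) atTop (𝓝 0) := by
  refine tendsto_pi_nhds.mpr ?_
  intro i
  rw [tendsto_pi_nhds]
  intro j
  have hmap : ∀ N : ℕ, (A.map Complex.ofReal) ^ N = (A ^ N).map Complex.ofReal := by
    intro N
    exact (map_pow (Complex.ofRealHom.mapMatrix) A N).symm
  have h0 := aux_pow_entry_tendsto (A.map Complex.ofReal) hs i j
  have heq : ∀ N : ℕ, ‖((A.map Complex.ofReal) ^ N) i j‖ = ‖(A ^ N) i j‖ := by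
    intro N
    rw [hmap N]
    simp [Matrix.map_apply, Complex.norm_real]
  simp_rw [heq] at h0
  have : Tendsto (fun N : ℕ => (A ^ N) i j) atTop (𝓝 0) := by
    refine squeeze_zero_norm (fun N => le_of_eq rfl) h0
  simpa using this

/-- if the spectral radius of I + hB is < 1 and R is the positive
definite solution of the discrete Lyapunov equation R = 2hσ²I + (I+hB)R(I+hB)ᵀ,
then R ⪰ σ²V in the Loewner order. -/
theorem lyapunov_solution_lower_bound
    (n : ℕ) (V S B R : Matrix (Fin n) (Fin n) ℝ)
    (hV : V.PosDef) (hVsym : Vᵀ = V) (hSskew : Sᵀ = -S)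
    (hB : B = -((1 + S) * V⁻¹))
    (h σ : ℝ) (hh : 0 < h) (hσ : 0 < σ)
    (hspec : spectralRadius ℂ ((1 + h • B).map (Complex.ofReal)) < 1)
    (hR : R.PosDef)
    (hLyap : R = (2 * h * σ ^ 2) • (1 : Matrix (Fin n) (Fin n) ℝ)
        + (1 + h • B) * R * (1 + h • B)ᵀ)
    (huniq : ∀ R' : Matrix (Fin n) (Fin n) ℝ, R'.PosDef →
      R' = (2 * h * σ ^ 2) • (1 : Matrix (Fin n) (Fin n) ℝ)
        + (1 + h • B) * R' * (1 + h • B)ᵀ → R' = R) :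
    (R - σ ^ 2 • V).PosSemidef := by
  have hdet : IsUnit V.det := isUnit_iff_ne_zero.mpr (ne_of_gt hV.det_pos)
  have hVV : V⁻¹ * V = 1 := Matrix.nonsing_inv_mul V hdet
  have hVV' : V * V⁻¹ = 1 := Matrix.mul_nonsing_inv V hdet
  have hBV : B * V = -(1 + S) := by
    rw [hB, Matrix.neg_mul, Matrix.mul_assoc, hVV, Matrix.mul_one]
  have hBt : Bᵀ = -(V⁻¹ * (1 - S)) := by
    rw [hB, Matrix.transpose_neg, Matrix.transpose_mul, Matrix.transpose_nonsing_inv,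
      hVsym, Matrix.transpose_add, Matrix.transpose_one, hSskew, ← sub_eq_add_neg]
  have hVBt : V * Bᵀ = -(1 - S) := by
    rw [hBt, Matrix.mul_neg, ← Matrix.mul_assoc, hVV', Matrix.one_mul]
  have hAt : (1 + h • B)ᵀ = 1 + h • Bᵀ := by
    rw [Matrix.transpose_add, Matrix.transpose_smul, Matrix.transpose_one]
  have expandV : (1 + h • B) * (σ ^ 2 • V) * (1 + h • B)ᵀ
      = σ ^ 2 • V + (h * σ ^ 2) • (B * V) + (h * σ ^ 2) • (V * Bᵀ)
        + (h ^ 2 * σ ^ 2) • (B * (V * Bᵀ)) := by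
    rw [hAt]
    simp only [Matrix.add_mul, Matrix.mul_add, Matrix.one_mul, Matrix.mul_one,
      Matrix.smul_mul, Matrix.mul_smul, smul_smul, Matrix.mul_assoc]
    module
  have h1 : (1 + h • B) * R * (1 + h • B)ᵀ = R - (2 * h * σ ^ 2) • 1 := by
    nth_rewrite 2 [hLyap]
    abel
  have key : R - σ ^ 2 • V
      = (1 + h • B) * (R - σ ^ 2 • V) * (1 + h • B)ᵀ
        + (h ^ 2 * σ ^ 2) • (B * (V * Bᵀ)) := by
    rw [Matrix.mul_sub, Matrix.sub_mul, h1, expandV, hBV, hVBt]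
    module
  have key' : (1 + h • B) * (R - σ ^ 2 • V) * (1 + h • B)ᵀ
      = (R - σ ^ 2 • V) - (h ^ 2 * σ ^ 2) • (B * (V * Bᵀ)) :=
    eq_sub_of_add_eq key.symm
  -- the inhomogeneous term is PSD
  have hQ0 := hV.posSemidef.mul_mul_conjTranspose_same ((h * σ) • B)
  rw [Matrix.conjTranspose_eq_transpose_of_trivial] at hQ0
  have hQ : ((h ^ 2 * σ ^ 2) • (B * (V * Bᵀ))).PosSemidef := by
    have heq : (h * σ) • B * V * ((h * σ) • B)ᵀ
        = (h ^ 2 * σ ^ 2) • (B * (V * Bᵀ)) := by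
      rw [Matrix.transpose_smul]
      simp only [Matrix.smul_mul, Matrix.mul_smul, smul_smul, Matrix.mul_assoc]
      module
    rwa [heq] at hQ0
  -- monotone iteration
  have mono : ∀ N : ℕ,
      ((R - σ ^ 2 • V)
        - (1 + h • B) ^ N * (R - σ ^ 2 • V) * ((1 + h • B) ^ N)ᵀ).PosSemidef := by
    intro N
    induction N with
    | zero => simpa using Matrix.PosSemidef.zero
    | succ N ih =>
      have hconj := ih.mul_mul_conjTranspose_same (1 + h • B)
      rw [Matrix.conjTranspose_eq_transpose_of_trivial] at hconj
      have hsum := hQ.add hconj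
      have heq : (h ^ 2 * σ ^ 2) • (B * (V * Bᵀ))
          + (1 + h • B)
            * ((R - σ ^ 2 • V)
              - (1 + h • B) ^ N * (R - σ ^ 2 • V) * ((1 + h • B) ^ N)ᵀ)
            * (1 + h • B)ᵀ
          = (R - σ ^ 2 • V)
            - (1 + h • B) ^ (N + 1) * (R - σ ^ 2 • V) * ((1 + h • B) ^ (N + 1))ᵀ := by
        rw [Matrix.mul_sub, Matrix.sub_mul, key', pow_succ' (1 + h • B) N,
          Matrix.transpose_mul]
        simp only [Matrix.mul_assoc]
        abel
      rwa [heq] at hsum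
  have hRsym : Rᵀ = R := by
    rw [← Matrix.conjTranspose_eq_transpose_of_trivial]; exact hR.1
  rw [Matrix.posSemidef_iff_dotProduct_mulVec]
  constructor
  · show (R - σ ^ 2 • V)ᴴ = R - σ ^ 2 • V
    rw [Matrix.conjTranspose_eq_transpose_of_trivial,
      Matrix.transpose_sub, Matrix.transpose_smul, hVsym, hRsym]
  · intro x
    have hle : ∀ N : ℕ,
        x ⬝ᵥ ((1 + h • B) ^ N * (R - σ ^ 2 • V) * ((1 + h • B) ^ N)ᵀ) *ᵥ x
          ≤ x ⬝ᵥ (R - σ ^ 2 • V) *ᵥ x := by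
      intro N
      have := (mono N).dotProduct_mulVec_nonneg x
      simp only [star_trivial, Matrix.sub_mulVec, dotProduct_sub] at this ⊢
      linarith
    have hA0 : Tendsto (fun N : ℕ => (1 + h • B) ^ N) atTop (𝓝 0) :=
      aux_real_pow_tendsto (1 + h • B) hspec
    have hcont : Continuous
        (fun P : Matrix (Fin n) (Fin n) ℝ =>
          x ⬝ᵥ (P * (R - σ ^ 2 • V) * Pᵀ) *ᵥ x) := by
      exact continuous_const.dotProduct
        (((continuous_id.matrix_mul continuous_const).matrix_mul
          continuous_id.matrix_transpose).matrix_mulVec continuous_const)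
    have hg : Tendsto
        (fun N : ℕ =>
          x ⬝ᵥ ((1 + h • B) ^ N * (R - σ ^ 2 • V) * ((1 + h • B) ^ N)ᵀ) *ᵥ x)
        atTop (𝓝 (x ⬝ᵥ ((0 : Matrix (Fin n) (Fin n) ℝ) * (R - σ ^ 2 • V) * (0 : Matrix (Fin n) (Fin n) ℝ)ᵀ) *ᵥ x)) :=
      (hcont.tendsto 0).comp hA0
    have hg0 : Tendsto
        (fun N : ℕ =>
          x ⬝ᵥ ((1 + h • B) ^ N * (R - σ ^ 2 • V) * ((1 + h • B) ^ N)ᵀ) *ᵥ x)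
        atTop (𝓝 0) := by
      simpa using hg
    have := le_of_tendsto' hg0 hle
    simpa [star_trivial] using this
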